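/- Fix an even population size N and an even experimental size m with 2 ≤ m ≤ N. Among all treatment rules δ : {0,1}^m → [0,1], the empirical success rule δ̂ — which outputs 1 if the treated sample mean strictly exceeds the control sample mean, 1/2 if they are equal, and 0 otherwise — minimizes the worst-case finite-population regret sup_{(μ1,μ0)∈[0,1]²} Reg(m, δ, μ1, μ0). -/

import Mathlib

open Finset

/-- Probability of a Bernoulli data realization `ω : Fin m → Bool`, where the first
`m/2` units are treated (success probability `μ1`) and the rest are controls
(success probability `μ0`). -/
noncomputable def outcomeProb (m : ℕ) (μ1 μ0 : ℝ) (ω : Fin m → Bool) : ℝ :=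
  ∏ i : Fin m,
    if (i : ℕ) < m / 2 then (if ω i then μ1 else 1 - μ1)
    else (if ω i then μ0 else 1 - μ0)

/-- Expected value of a treatment rule `δ` under the experimental data distribution. -/
noncomputable def expDelta (m : ℕ) (μ1 μ0 : ℝ) (δ : (Fin m → Bool) → ℝ) : ℝ :=
  ∑ ω : Fin m → Bool, outcomeProb m μ1 μ0 ω * δ ω

/-- Expected finite-population welfare `g(m, δ, μ1, μ0)`. -/
noncomputable def welfare (N m : ℕ) (μ1 μ0 : ℝ) (δ : (Fin m → Bool) → ℝ) : ℝ :=
  ((m : ℝ) / 2) * (μ1 + μ0) +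
    ((N : ℝ) - (m : ℝ)) * (μ0 * (1 - expDelta m μ1 μ0 δ) + μ1 * expDelta m μ1 μ0 δ)

/-- Finite-population regret `Reg(m, δ, μ1, μ0)`. -/
noncomputable def regret (N m : ℕ) (μ1 μ0 : ℝ) (δ : (Fin m → Bool) → ℝ) : ℝ :=
  (N : ℝ) * max μ1 μ0 - welfare N m μ1 μ0 δ

/-- Treated sample mean. -/
noncomputable def treatedMean (m : ℕ) (ω : Fin m → Bool) : ℝ :=
  (2 / (m : ℝ)) * ∑ i : Fin m, if (i : ℕ) < m / 2 then (if ω i then (1 : ℝ) else 0) else 0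

/-- Control sample mean. -/
noncomputable def controlMean (m : ℕ) (ω : Fin m → Bool) : ℝ :=
  (2 / (m : ℝ)) * ∑ i : Fin m, if (i : ℕ) < m / 2 then 0 else (if ω i then (1 : ℝ) else 0)

/-- The empirical success rule. -/
noncomputable def esRule (m : ℕ) (ω : Fin m → Bool) : ℝ :=
  if controlMean m ω < treatedMean m ω then 1
  else if treatedMean m ω = controlMean m ω then 1 / 2
  else 0
section Aux
-- counting lemmas
lemma card_lt_filter (m k : ℕ) (hk : k ≤ m) :
    (univ.filter (fun i : Fin m => (i : ℕ) < k)).card = k := by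
  apply Finset.card_eq_of_bijective (fun j hj => ⟨j, lt_of_lt_of_le hj hk⟩)
  · intro i hi
    simp only [mem_filter, mem_univ, true_and] at hi
    exact ⟨i, hi, rfl⟩
  · intro j hj; simp [hj]
  · intro i j hi hj h
    simpa using congrArg Fin.val h

lemma card_ge_filter (m k : ℕ) (hk : k ≤ m) :
    (univ.filter (fun i : Fin m => ¬ ((i : ℕ) < k))).card = m - k := by
  have := Finset.card_filter_add_card_filter_not (s := (univ : Finset (Fin m)))
    (p := fun i : Fin m => (i : ℕ) < k)
  rw [card_lt_filter m k hk] at this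
  simp only [Finset.card_univ, Fintype.card_fin] at this
  omega

noncomputable def Scount (m : ℕ) (ω : Fin m → Bool) : ℕ :=
  (univ.filter (fun i : Fin m => (i : ℕ) < m / 2 ∧ ω i)).card

noncomputable def Tcount (m : ℕ) (ω : Fin m → Bool) : ℕ :=
  (univ.filter (fun i : Fin m => ¬ ((i : ℕ) < m / 2) ∧ ω i)).card

lemma treatedMean_eq (m : ℕ) (ω : Fin m → Bool) :
    treatedMean m ω = (2 / (m : ℝ)) * Scount m ω := by
  unfold treatedMean Scount
  congr 1
  rw [← Finset.sum_boole]
  apply Finset.sum_congr rfl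
  intro i _
  by_cases h1 : (i : ℕ) < m / 2 <;> by_cases h2 : ω i <;> simp [h1, h2]

lemma controlMean_eq (m : ℕ) (ω : Fin m → Bool) :
    controlMean m ω = (2 / (m : ℝ)) * Tcount m ω := by
  unfold controlMean Tcount
  congr 1
  rw [← Finset.sum_boole]
  apply Finset.sum_congr rfl
  intro i _
  by_cases h1 : (i : ℕ) < m / 2 <;> by_cases h2 : ω i <;> simp [h1, h2]

lemma Scount_le (m : ℕ) (ω : Fin m → Bool) : Scount m ω ≤ m / 2 := by
  rw [← card_lt_filter m (m/2) (Nat.div_le_self m 2)]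
  apply Finset.card_le_card
  apply Finset.monotone_filter_right
  intro i _ hi; exact hi.1

lemma Tcount_le (m : ℕ) (hm : Even m) (ω : Fin m → Bool) : Tcount m ω ≤ m / 2 := by
  have h2 : m - m / 2 = m / 2 := by obtain ⟨k, rfl⟩ := hm; omega
  rw [← h2, ← card_ge_filter m (m/2) (Nat.div_le_self m 2)]
  apply Finset.card_le_card
  apply Finset.monotone_filter_right
  intro i _ hi; exact hi.1


lemma outcomeProb_eq (m : ℕ) (hm : Even m) (a b : ℝ) (ω : Fin m → Bool) :
    outcomeProb m a b ω =
      (a ^ Scount m ω * (1 - a) ^ (m / 2 - Scount m ω)) *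
        (b ^ Tcount m ω * (1 - b) ^ (m / 2 - Tcount m ω)) := by
  unfold outcomeProb
  rw [Finset.prod_ite]
  have hcard1 : ((univ.filter (fun i : Fin m => (i : ℕ) < m / 2)).filter
      (fun i => ω i = true)).card = Scount m ω := by
    rw [Finset.filter_filter]; rfl
  have hsplit1 := Finset.card_filter_add_card_filter_not
    (s := univ.filter (fun i : Fin m => (i : ℕ) < m / 2)) (p := fun i => ω i = true)
  rw [hcard1, card_lt_filter m (m/2) (Nat.div_le_self m 2)] at hsplit1
  have hcard2 : ((univ.filter (fun i : Fin m => ¬ ((i : ℕ) < m / 2))).filter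
      (fun i => ω i = true)).card = Tcount m ω := by
    rw [Finset.filter_filter]; rfl
  have hsplit2 := Finset.card_filter_add_card_filter_not
    (s := univ.filter (fun i : Fin m => ¬ ((i : ℕ) < m / 2))) (p := fun i => ω i = true)
  rw [hcard2, card_ge_filter m (m/2) (Nat.div_le_self m 2)] at hsplit2
  have hmm : m - m / 2 = m / 2 := by obtain ⟨k, rfl⟩ := hm; omega
  rw [hmm] at hsplit2
  rw [Finset.prod_ite, Finset.prod_ite]
  simp only [Finset.prod_const]
  rw [hcard1, hcard2]
  have e1 : ((univ.filter (fun i : Fin m => (i : ℕ) < m / 2)).filter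
      (fun i => ¬ (ω i = true))).card = m / 2 - Scount m ω := by omega
  have e2 : ((univ.filter (fun i : Fin m => ¬ ((i : ℕ) < m / 2))).filter
      (fun i => ¬ (ω i = true))).card = m / 2 - Tcount m ω := by omega
  rw [e1, e2]


lemma esRule_eq (m : ℕ) (h2 : 2 ≤ m) (ω : Fin m → Bool) :
    esRule m ω = if Tcount m ω < Scount m ω then 1
      else if Scount m ω = Tcount m ω then 1 / 2 else 0 := by
  have hm0 : (0 : ℝ) < 2 / (m : ℝ) := by
    apply div_pos two_pos
    exact_mod_cast Nat.lt_of_lt_of_le Nat.zero_lt_two h2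
  unfold esRule
  rw [treatedMean_eq, controlMean_eq]
  have hlt : (2 / (m : ℝ)) * (Tcount m ω) < (2 / (m : ℝ)) * (Scount m ω) ↔
      Tcount m ω < Scount m ω := by
    rw [mul_lt_mul_iff_right₀ hm0]; exact_mod_cast Iff.rfl
  have heq : (2 / (m : ℝ)) * (Scount m ω) = (2 / (m : ℝ)) * (Tcount m ω) ↔
      Scount m ω = Tcount m ω := by
    constructor
    · intro h
      have := mul_left_cancel₀ (ne_of_gt hm0) h
      exact_mod_cast this
    · intro h; rw [h]
  rcases lt_trichotomy (Tcount m ω) (Scount m ω) with h | h | h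
  · rw [if_pos (hlt.mpr h), if_pos h]
  · rw [if_neg (by rw [hlt]; omega), if_pos (heq.mpr h.symm), if_neg (by omega),
      if_pos h.symm]
  · rw [if_neg (by rw [hlt]; omega), if_neg (by rw [heq]; omega), if_neg (by omega),
      if_neg (by omega)]

-- core algebraic comparison
lemma pow_prod_compare (a b : ℝ) (hb0 : 0 ≤ b) (hba : b ≤ a) (ha1 : a ≤ 1)
    (n S T : ℕ) (hS : S ≤ n) (hT : T ≤ n) (hTS : T < S) :
    b ^ S * (1 - b) ^ (n - S) * (a ^ T * (1 - a) ^ (n - T)) ≤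
      a ^ S * (1 - a) ^ (n - S) * (b ^ T * (1 - b) ^ (n - T)) := by
  obtain ⟨k, hk⟩ : ∃ k, S = T + k := ⟨S - T, by omega⟩
  have hnT : n - T = (n - S) + k := by omega
  have ha0 : 0 ≤ a := le_trans hb0 hba
  have hb1 : b ≤ 1 := le_trans hba ha1
  have hC : 0 ≤ a ^ T * b ^ T * ((1 - a) ^ (n - S) * (1 - b) ^ (n - S)) := by
    apply mul_nonneg (mul_nonneg (pow_nonneg ha0 _) (pow_nonneg hb0 _))
    exact mul_nonneg (pow_nonneg (by linarith) _) (pow_nonneg (by linarith) _)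
  have key : (b * (1 - a)) ^ k ≤ (a * (1 - b)) ^ k := by
    apply pow_le_pow_left₀ (by nlinarith) (by nlinarith)
  calc b ^ S * (1 - b) ^ (n - S) * (a ^ T * (1 - a) ^ (n - T))
      = (a ^ T * b ^ T * ((1 - a) ^ (n - S) * (1 - b) ^ (n - S))) * (b * (1 - a)) ^ k := by
        rw [hnT, hk]; simp only [pow_add, mul_pow]; ring
    _ ≤ (a ^ T * b ^ T * ((1 - a) ^ (n - S) * (1 - b) ^ (n - S))) * (a * (1 - b)) ^ k :=
        mul_le_mul_of_nonneg_left key hC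
    _ = a ^ S * (1 - a) ^ (n - S) * (b ^ T * (1 - b) ^ (n - T)) := by
        rw [hnT, hk]; simp only [pow_add, mul_pow]; ring


lemma pointwise_dom (m : ℕ) (hm : Even m) (h2 : 2 ≤ m) (a b : ℝ)
    (hb0 : 0 ≤ b) (hba : b ≤ a) (ha1 : a ≤ 1)
    (δ : (Fin m → Bool) → ℝ) (hδ : ∀ ω, δ ω ∈ Set.Icc (0 : ℝ) 1) (ω : Fin m → Bool) :
    (outcomeProb m a b ω - outcomeProb m b a ω) * δ ω ≤
      (outcomeProb m a b ω - outcomeProb m b a ω) * esRule m ω := by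
  have hS := Scount_le m ω
  have hT := Tcount_le m hm ω
  rw [esRule_eq m h2 ω, outcomeProb_eq m hm a b ω, outcomeProb_eq m hm b a ω]
  rcases lt_trichotomy (Tcount m ω) (Scount m ω) with h | h | h
  · rw [if_pos h]
    have hdiff : 0 ≤ a ^ Scount m ω * (1 - a) ^ (m / 2 - Scount m ω) *
        (b ^ Tcount m ω * (1 - b) ^ (m / 2 - Tcount m ω)) -
        b ^ Scount m ω * (1 - b) ^ (m / 2 - Scount m ω) *
        (a ^ Tcount m ω * (1 - a) ^ (m / 2 - Tcount m ω)) := by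
      have := pow_prod_compare a b hb0 hba ha1 (m / 2) (Scount m ω) (Tcount m ω) hS hT h
      linarith
    have := (hδ ω).2
    nlinarith
  · rw [if_neg (by omega), if_pos h.symm]
    have heq : b ^ Scount m ω * (1 - b) ^ (m / 2 - Scount m ω) *
        (a ^ Tcount m ω * (1 - a) ^ (m / 2 - Tcount m ω)) =
        a ^ Scount m ω * (1 - a) ^ (m / 2 - Scount m ω) *
        (b ^ Tcount m ω * (1 - b) ^ (m / 2 - Tcount m ω)) := by
      rw [← h]; ring
    rw [heq]; simp
  · rw [if_neg (by omega), if_neg (by omega)]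
    have hdiff : a ^ Scount m ω * (1 - a) ^ (m / 2 - Scount m ω) *
        (b ^ Tcount m ω * (1 - b) ^ (m / 2 - Tcount m ω)) -
        b ^ Scount m ω * (1 - b) ^ (m / 2 - Scount m ω) *
        (a ^ Tcount m ω * (1 - a) ^ (m / 2 - Tcount m ω)) ≤ 0 := by
      have := pow_prod_compare a b hb0 hba ha1 (m / 2)
        (Tcount m ω) (Scount m ω) hT hS h
      linarith
    have := (hδ ω).1
    nlinarith

lemma expDelta_diff (m : ℕ) (a b : ℝ) (δ : (Fin m → Bool) → ℝ) :
    expDelta m a b δ - expDelta m b a δ =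
      ∑ ω : Fin m → Bool, (outcomeProb m a b ω - outcomeProb m b a ω) * δ ω := by
  unfold expDelta
  rw [← Finset.sum_sub_distrib]
  apply Finset.sum_congr rfl
  intro ω _; ring

lemma expDelta_dom (m : ℕ) (hm : Even m) (h2 : 2 ≤ m) (a b : ℝ)
    (hb0 : 0 ≤ b) (hba : b ≤ a) (ha1 : a ≤ 1)
    (δ : (Fin m → Bool) → ℝ) (hδ : ∀ ω, δ ω ∈ Set.Icc (0 : ℝ) 1) :
    expDelta m a b δ - expDelta m b a δ ≤
      expDelta m a b (esRule m) - expDelta m b a (esRule m) := by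
  rw [expDelta_diff, expDelta_diff]
  apply Finset.sum_le_sum
  intro ω _
  exact pointwise_dom m hm h2 a b hb0 hba ha1 δ hδ ω


lemma sum_outcomeProb (m : ℕ) (a b : ℝ) :
    ∑ ω : Fin m → Bool, outcomeProb m a b ω = 1 := by
  have key := (Finset.prod_univ_sum (fun _ : Fin m => (univ : Finset Bool))
    (fun i x => if (i : ℕ) < m / 2 then (if x then a else 1 - a)
      else (if x then b else 1 - b))).symm
  rw [Fintype.piFinset_univ] at key
  unfold outcomeProb
  rw [key, Finset.prod_eq_one]
  intro i _
  rw [Fintype.sum_bool]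
  by_cases h : (i : ℕ) < m / 2 <;> simp [h] <;> ring

section Swap

lemma swap_mod_val (k i : ℕ) (hi : i < k + k) :
    (i + k) % (k + k) = if i < k then i + k else i - k := by
  by_cases h : i < k
  · rw [Nat.mod_eq_of_lt (by omega), if_pos h]
  · rw [Nat.mod_eq_sub_mod (by omega)]
    have hs : i + k - (k + k) = i - k := by omega
    rw [hs, Nat.mod_eq_of_lt (by omega), if_neg h]

noncomputable def swapFun (m : ℕ) (ω : Fin m → Bool) : Fin m → Bool :=
  fun i => if h : 0 < m then ω ⟨((i : ℕ) + m / 2) % m, Nat.mod_lt _ h⟩ else ω i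

lemma swapFun_apply (m : ℕ) (h0 : 0 < m) (ω : Fin m → Bool) (i : Fin m) :
    swapFun m ω i = ω ⟨((i : ℕ) + m / 2) % m, Nat.mod_lt _ h0⟩ := by
  simp [swapFun, h0]

lemma swapFun_invol (m : ℕ) (h0 : 0 < m) (hm : Even m) (ω : Fin m → Bool) :
    swapFun m (swapFun m ω) = ω := by
  obtain ⟨k, hk⟩ := hm
  subst hk
  have hdiv : (k + k) / 2 = k := by omega
  funext i
  have hi := i.isLt
  rw [swapFun_apply _ h0, swapFun_apply _ h0]
  congr 1
  apply Fin.ext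
  simp only [hdiv]
  rw [swap_mod_val k i hi]
  have hlt2 : (if (i : ℕ) < k then (i : ℕ) + k else (i : ℕ) - k) < k + k := by
    split_ifs <;> omega
  rw [swap_mod_val k _ hlt2]
  split_ifs <;> omega

lemma swapFun_lt_iff (m : ℕ) (hm : Even m) (i : Fin m) :
    ((((i : ℕ) + m / 2) % m) < m / 2) ↔ ¬ ((i : ℕ) < m / 2) := by
  obtain ⟨k, hk⟩ := hm
  subst hk
  have hdiv : (k + k) / 2 = k := by omega
  have hi := i.isLt
  rw [hdiv, swap_mod_val k i hi]
  split_ifs with h <;> constructor <;> intro <;> omega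

lemma outcomeProb_swap (m : ℕ) (h2 : 2 ≤ m) (hm : Even m) (a b : ℝ) (ω : Fin m → Bool) :
    outcomeProb m a b (swapFun m ω) = outcomeProb m b a ω := by
  have h0 : 0 < m := by omega
  haveI : NeZero m := ⟨by omega⟩
  unfold outcomeProb
  set c : Fin m := ⟨m / 2, by omega⟩ with hc
  have he : ∀ i : Fin m, (⟨((i : ℕ) + m / 2) % m, Nat.mod_lt _ h0⟩ : Fin m) = i + c := by
    intro i; apply Fin.ext; simp [Fin.add_def, hc]
  have hval : ∀ i : Fin m, ((i + c : Fin m) : ℕ) = ((i : ℕ) + m / 2) % m := by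
    intro i; simp [Fin.add_def, hc]
  have hprod := Equiv.prod_comp (Equiv.addRight c)
    (fun j : Fin m => if (j : ℕ) < m / 2 then (if ω j then b else 1 - b)
      else (if ω j then a else 1 - a))
  rw [← hprod]
  apply Finset.prod_congr rfl
  intro i _
  have hlt : (((i + c : Fin m) : ℕ) < m / 2) ↔ ¬ ((i : ℕ) < m / 2) := by
    rw [hval i]; exact swapFun_lt_iff m hm i
  rw [swapFun_apply m h0, he i]
  simp only [Equiv.coe_addRight]
  by_cases h : (i : ℕ) < m / 2
  · have hn : ¬ (((i + c : Fin m) : ℕ) < m / 2) := by rw [hlt]; exact not_not_intro h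
    rw [if_pos h]; exact (if_neg hn).symm
  · rw [if_neg h]; exact (if_pos (hlt.mpr h)).symm


lemma treatedMean_swap (m : ℕ) (h2 : 2 ≤ m) (hm : Even m) (ω : Fin m → Bool) :
    treatedMean m (swapFun m ω) = controlMean m ω := by
  have h0 : 0 < m := by omega
  haveI : NeZero m := ⟨by omega⟩
  unfold treatedMean controlMean
  congr 1
  set c : Fin m := ⟨m / 2, by omega⟩ with hc
  have he : ∀ i : Fin m, (⟨((i : ℕ) + m / 2) % m, Nat.mod_lt _ h0⟩ : Fin m) = i + c := by
    intro i; apply Fin.ext; simp [Fin.add_def, hc]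
  have hval : ∀ i : Fin m, ((i + c : Fin m) : ℕ) = ((i : ℕ) + m / 2) % m := by
    intro i; simp [Fin.add_def, hc]
  have hsum := Equiv.sum_comp (Equiv.addRight c)
    (fun j : Fin m => if (j : ℕ) < m / 2 then 0 else (if ω j then (1 : ℝ) else 0))
  rw [← hsum]
  apply Finset.sum_congr rfl
  intro i _
  have hlt : (((i + c : Fin m) : ℕ) < m / 2) ↔ ¬ ((i : ℕ) < m / 2) := by
    rw [hval i]; exact swapFun_lt_iff m hm i
  rw [swapFun_apply m h0, he i]
  simp only [Equiv.coe_addRight]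
  by_cases h : (i : ℕ) < m / 2
  · have hn : ¬ (((i + c : Fin m) : ℕ) < m / 2) := by rw [hlt]; exact not_not_intro h
    rw [if_pos h]; exact (if_neg hn).symm
  · rw [if_neg h]; exact (if_pos (hlt.mpr h)).symm

lemma controlMean_swap (m : ℕ) (h2 : 2 ≤ m) (hm : Even m) (ω : Fin m → Bool) :
    controlMean m (swapFun m ω) = treatedMean m ω := by
  have h0 : 0 < m := by omega
  haveI : NeZero m := ⟨by omega⟩
  unfold treatedMean controlMean
  congr 1
  set c : Fin m := ⟨m / 2, by omega⟩ with hc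
  have he : ∀ i : Fin m, (⟨((i : ℕ) + m / 2) % m, Nat.mod_lt _ h0⟩ : Fin m) = i + c := by
    intro i; apply Fin.ext; simp [Fin.add_def, hc]
  have hval : ∀ i : Fin m, ((i + c : Fin m) : ℕ) = ((i : ℕ) + m / 2) % m := by
    intro i; simp [Fin.add_def, hc]
  have hsum := Equiv.sum_comp (Equiv.addRight c)
    (fun j : Fin m => if (j : ℕ) < m / 2 then (if ω j then (1 : ℝ) else 0) else 0)
  rw [← hsum]
  apply Finset.sum_congr rfl
  intro i _
  have hlt : (((i + c : Fin m) : ℕ) < m / 2) ↔ ¬ ((i : ℕ) < m / 2) := by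
    rw [hval i]; exact swapFun_lt_iff m hm i
  rw [swapFun_apply m h0, he i]
  simp only [Equiv.coe_addRight]
  by_cases h : (i : ℕ) < m / 2
  · have hn : ¬ (((i + c : Fin m) : ℕ) < m / 2) := by rw [hlt]; exact not_not_intro h
    rw [if_pos h]; exact (if_neg hn).symm
  · rw [if_neg h]; exact (if_pos (hlt.mpr h)).symm

lemma esRule_swap (m : ℕ) (h2 : 2 ≤ m) (hm : Even m) (ω : Fin m → Bool) :
    esRule m (swapFun m ω) = 1 - esRule m ω := by
  unfold esRule
  rw [treatedMean_swap m h2 hm ω, controlMean_swap m h2 hm ω]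
  rcases lt_trichotomy (controlMean m ω) (treatedMean m ω) with h | h | h
  · rw [if_neg (not_lt.mpr h.le), if_neg (ne_of_lt h), if_pos h]
    norm_num
  · rw [if_neg (by rw [h]; exact lt_irrefl _), if_pos h,
      if_neg (by rw [h]; exact lt_irrefl _), if_pos h.symm]
    norm_num
  · rw [if_pos h, if_neg (not_lt.mpr h.le), if_neg (ne_of_lt h)]
    norm_num

lemma expDelta_es_symm (m : ℕ) (h2 : 2 ≤ m) (hm : Even m) (a b : ℝ) :
    expDelta m b a (esRule m) = 1 - expDelta m a b (esRule m) := by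
  have h0 : 0 < m := by omega
  set E : (Fin m → Bool) ≃ (Fin m → Bool) :=
    ⟨swapFun m, swapFun m, swapFun_invol m h0 hm, swapFun_invol m h0 hm⟩ with hE
  unfold expDelta
  calc ∑ ω : Fin m → Bool, outcomeProb m b a ω * esRule m ω
      = ∑ ω : Fin m → Bool,
          (fun ψ => outcomeProb m a b ψ * esRule m (swapFun m ψ)) (E ω) := by
        apply Finset.sum_congr rfl
        intro ω _
        simp only [hE, Equiv.coe_fn_mk]
        rw [outcomeProb_swap m h2 hm a b ω, swapFun_invol m h0 hm ω]
    _ = ∑ ψ : Fin m → Bool, outcomeProb m a b ψ * esRule m (swapFun m ψ) :=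
        Equiv.sum_comp E (fun ψ => outcomeProb m a b ψ * esRule m (swapFun m ψ))
    _ = ∑ ψ : Fin m → Bool, outcomeProb m a b ψ * (1 - esRule m ψ) := by
        apply Finset.sum_congr rfl
        intro ψ _
        rw [esRule_swap m h2 hm ψ]
    _ = (∑ ψ : Fin m → Bool, outcomeProb m a b ψ) -
          ∑ ψ : Fin m → Bool, outcomeProb m a b ψ * esRule m ψ := by
        rw [← Finset.sum_sub_distrib]
        exact Finset.sum_congr rfl (fun ψ _ => by ring)
    _ = 1 - ∑ ψ : Fin m → Bool, outcomeProb m a b ψ * esRule m ψ := by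
        rw [sum_outcomeProb]

lemma regret_es_symm (N m : ℕ) (h2 : 2 ≤ m) (hm : Even m) (a b : ℝ) :
    regret N m a b (esRule m) = regret N m b a (esRule m) := by
  unfold regret welfare
  rw [expDelta_es_symm m h2 hm a b, max_comm]
  ring

end Swap

lemma regret_sum_le (N m : ℕ) (h2 : 2 ≤ m) (hm : Even m) (hmN : m ≤ N)
    (a b : ℝ) (hb0 : 0 ≤ b) (hba : b ≤ a) (ha1 : a ≤ 1)
    (δ : (Fin m → Bool) → ℝ) (hδ : ∀ ω, δ ω ∈ Set.Icc (0 : ℝ) 1) :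
    regret N m a b (esRule m) + regret N m b a (esRule m) ≤
      regret N m a b δ + regret N m b a δ := by
  have hE := expDelta_dom m hm h2 a b hb0 hba ha1 δ hδ
  have hNm : (m : ℝ) ≤ (N : ℝ) := by exact_mod_cast hmN
  have hc : (0 : ℝ) ≤ ((N : ℝ) - (m : ℝ)) * (a - b) := by
    apply mul_nonneg <;> linarith
  have key := mul_le_mul_of_nonneg_left hE hc
  unfold regret welfare
  nlinarith [key]

lemma outcomeProb_nonneg (m : ℕ) (a b : ℝ) (ha0 : 0 ≤ a) (ha1 : a ≤ 1)
    (hb0 : 0 ≤ b) (hb1 : b ≤ 1) (ω : Fin m → Bool) : 0 ≤ outcomeProb m a b ω := by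
  unfold outcomeProb
  apply Finset.prod_nonneg
  intro i _
  split_ifs <;> linarith

lemma expDelta_mem (m : ℕ) (a b : ℝ) (ha0 : 0 ≤ a) (ha1 : a ≤ 1)
    (hb0 : 0 ≤ b) (hb1 : b ≤ 1)
    (δ : (Fin m → Bool) → ℝ) (hδ : ∀ ω, δ ω ∈ Set.Icc (0 : ℝ) 1) :
    expDelta m a b δ ∈ Set.Icc (0 : ℝ) 1 := by
  constructor
  · apply Finset.sum_nonneg
    intro ω _
    exact mul_nonneg (outcomeProb_nonneg m a b ha0 ha1 hb0 hb1 ω) (hδ ω).1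
  · calc expDelta m a b δ ≤ ∑ ω : Fin m → Bool, outcomeProb m a b ω := by
          apply Finset.sum_le_sum
          intro ω _
          have h1 := outcomeProb_nonneg m a b ha0 ha1 hb0 hb1 ω
          have h2 := (hδ ω).2
          nlinarith
      _ = 1 := sum_outcomeProb m a b

lemma regret_le (N m : ℕ) (hmN : m ≤ N) (a b : ℝ) (ha0 : 0 ≤ a) (ha1 : a ≤ 1)
    (hb0 : 0 ≤ b) (hb1 : b ≤ 1)
    (δ : (Fin m → Bool) → ℝ) (hδ : ∀ ω, δ ω ∈ Set.Icc (0 : ℝ) 1) :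
    regret N m a b δ ≤ (N : ℝ) := by
  have hE := expDelta_mem m a b ha0 ha1 hb0 hb1 δ hδ
  obtain ⟨hE0, hE1⟩ := hE
  have hNm : (m : ℝ) ≤ (N : ℝ) := by exact_mod_cast hmN
  have hm0 : (0 : ℝ) ≤ (m : ℝ) := Nat.cast_nonneg m
  have hmax : max a b ≤ 1 := max_le ha1 hb1
  have hN0 : (0 : ℝ) ≤ (N : ℝ) := Nat.cast_nonneg N
  unfold regret welfare
  have hw : 0 ≤ ((m : ℝ) / 2) * (a + b) +
      ((N : ℝ) - (m : ℝ)) * (b * (1 - expDelta m a b δ) + a * expDelta m a b δ) := by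
    apply add_nonneg
    · apply mul_nonneg (by linarith) (by linarith)
    · apply mul_nonneg (by linarith)
      apply add_nonneg (mul_nonneg hb0 (by linarith)) (mul_nonneg ha0 hE0)
  nlinarith

end Aux

/-- The empirical success rule minimizes the worst-case finite-population regret
over `(μ1, μ0) ∈ [0,1]²` among all treatment rules `δ : {0,1}^m → [0,1]`. -/
theorem empirical_success_minimax_finite_population
    (N m : ℕ) (hN : Even N) (hm : Even m) (h2 : 2 ≤ m) (hmN : m ≤ N)
    (δ : (Fin m → Bool) → ℝ) (hδ : ∀ ω, δ ω ∈ Set.Icc (0 : ℝ) 1) :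
    (⨆ p : Set.Icc (0 : ℝ) 1 × Set.Icc (0 : ℝ) 1,
        regret N m (p.1 : ℝ) (p.2 : ℝ) (esRule m)) ≤
      ⨆ p : Set.Icc (0 : ℝ) 1 × Set.Icc (0 : ℝ) 1,
        regret N m (p.1 : ℝ) (p.2 : ℝ) δ := by
  haveI hne : Nonempty (Set.Icc (0 : ℝ) 1 × Set.Icc (0 : ℝ) 1) :=
    ⟨⟨⟨0, by norm_num⟩, ⟨0, by norm_num⟩⟩⟩
  have hbdd : BddAbove (Set.range fun p : Set.Icc (0 : ℝ) 1 × Set.Icc (0 : ℝ) 1 =>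
      regret N m (p.1 : ℝ) (p.2 : ℝ) δ) := by
    refine ⟨(N : ℝ), ?_⟩
    rintro x ⟨p, rfl⟩
    exact regret_le N m hmN _ _ p.1.2.1 p.1.2.2 p.2.2.1 p.2.2.2 δ hδ
  apply ciSup_le
  rintro ⟨⟨a, ha⟩, ⟨b, hb⟩⟩
  have hsym := regret_es_symm N m h2 hm a b
  have h1 : regret N m a b δ ≤
      ⨆ p : Set.Icc (0 : ℝ) 1 × Set.Icc (0 : ℝ) 1,
        regret N m (p.1 : ℝ) (p.2 : ℝ) δ :=
    le_ciSup hbdd (⟨⟨a, ha⟩, ⟨b, hb⟩⟩ : Set.Icc (0 : ℝ) 1 × Set.Icc (0 : ℝ) 1)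
  have h1' : regret N m b a δ ≤
      ⨆ p : Set.Icc (0 : ℝ) 1 × Set.Icc (0 : ℝ) 1,
        regret N m (p.1 : ℝ) (p.2 : ℝ) δ :=
    le_ciSup hbdd (⟨⟨b, hb⟩, ⟨a, ha⟩⟩ : Set.Icc (0 : ℝ) 1 × Set.Icc (0 : ℝ) 1)
  show regret N m a b (esRule m) ≤ _
  rcases le_total b a with hba | hab
  · have key := regret_sum_le N m h2 hm hmN a b hb.1 hba ha.2 δ hδ
    linarith
  · have key := regret_sum_le N m h2 hm hmN b a ha.1 hab hb.2 δ hδ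
    linarith
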